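/- Let y > 0 and let g ∈ 𝓕_y with integrable derivative g' satisfying ∫₀^y |g'| dλ > 0. Then LOM*_y(g) = 0 if and only if g is either non-decreasing everywhere on [0,y] or non-increasing everywhere on [0,y], and LOM*_y(g) = 1 if and only if LOI*_y(g) = LOD*_y(g). -/

import Mathlib

open MeasureTheory Set

namespace LomStarAux

open Filter Metric Topology

lemma ae_nonneg_of_mono (y : ℝ) (hy : 0 < y) (g g' : ℝ → ℝ)
    (hg' : IntervalIntegrable g' volume 0 y)
    (hg : ∀ x ∈ Icc (0 : ℝ) y, g x = ∫ t in (0 : ℝ)..x, g' t)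
    (hm : MonotoneOn g (Icc (0 : ℝ) y)) :
    ∀ᵐ x ∂(volume.restrict (Ioc (0:ℝ) y)), 0 ≤ g' x := by
  set f : ℝ → ℝ := (Ioc (0:ℝ) y).indicator g' with hf
  have hInt : IntegrableOn g' (Ioc (0:ℝ) y) volume := by
    have := hg'.def'
    rwa [uIoc_of_le hy.le] at this
  have hfi : Integrable f volume := (integrable_indicator_iff measurableSet_Ioc).2 hInt
  have hloc : LocallyIntegrable f volume := hfi.locallyIntegrable
  have key := IsUnifLocDoublingMeasure.ae_tendsto_average (μ := (volume : Measure ℝ)) hloc 1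
  have hae : ∀ᵐ x ∂(volume : Measure ℝ), x ∈ Ioo 0 y → 0 ≤ f x := by
    filter_upwards [key] with x hx hxm
    set ε : ℝ := min x (y - x) with hε
    have hεpos : 0 < ε := lt_min hxm.1 (by linarith [hxm.2])
    set δ : ℕ → ℝ := fun n => ε / (n + 1) with hδ
    have hδpos : ∀ n, 0 < δ n := fun n => div_pos hεpos (by positivity)
    have hδle : ∀ n, δ n ≤ ε := fun n => by
      rw [hδ]
      exact div_le_self hεpos.le (le_add_of_nonneg_left (Nat.cast_nonneg n))
    have hδt : Tendsto δ atTop (nhdsWithin 0 (Ioi 0)) := by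
      apply tendsto_nhdsWithin_of_tendsto_nhds_of_eventually_within
      · exact Tendsto.div_atTop (tendsto_const_nhds (x := ε))
          (tendsto_atTop_add_const_right atTop 1 tendsto_natCast_atTop_atTop)
      · exact Eventually.of_forall fun n => hδpos n
    have hmem : ∀ᶠ n in atTop, x ∈ closedBall x (1 * δ n) :=
      Eventually.of_forall fun n => mem_closedBall_self (by simpa using (hδpos n).le)
    have ht := hx (fun _ => x) δ hδt hmem
    refine ge_of_tendsto ht (Eventually.of_forall fun n => ?_)
    have h1 : 0 ≤ x - δ n := by linarith [hδle n, min_le_left x (y - x)]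
    have h2 : x + δ n ≤ y := by linarith [hδle n, min_le_right x (y - x)]
    have hxy1 : x - δ n ∈ Icc (0:ℝ) y := ⟨h1, by linarith [(hδpos n).le]⟩
    have hxy2 : x + δ n ∈ Icc (0:ℝ) y := ⟨by linarith [(hδpos n).le, h1], h2⟩
    have hball : closedBall x (δ n) = Icc (x - δ n) (x + δ n) := Real.closedBall_eq_Icc
    have hIcc : ∫ t in closedBall x (δ n), f t = ∫ t in Ioc (x - δ n) (x + δ n), f t := by
      rw [hball]
      exact (setIntegral_congr_set Ioc_ae_eq_Icc).symm
    have hsub : Ioc (x - δ n) (x + δ n) ⊆ Ioc (0:ℝ) y := Ioc_subset_Ioc h1 h2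
    have hind : ∫ t in Ioc (x - δ n) (x + δ n), f t = ∫ t in Ioc (x - δ n) (x + δ n), g' t := by
      refine setIntegral_congr_fun measurableSet_Ioc fun t ht => ?_
      exact indicator_of_mem (hsub ht) g'
    have hab : x - δ n ≤ x + δ n := by linarith [(hδpos n).le]
    have hIi : ∫ t in Ioc (x - δ n) (x + δ n), g' t = ∫ t in (x - δ n)..(x + δ n), g' t :=
      (intervalIntegral.integral_of_le hab).symm
    have hgint : ∀ a ∈ Icc (0:ℝ) y, IntervalIntegrable g' volume 0 a := by
      intro a ha
      exact hg'.mono_set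
        (by rw [uIcc_of_le hy.le, uIcc_of_le ha.1]; exact Icc_subset_Icc le_rfl ha.2)
    have hsubint : ∫ t in (x - δ n)..(x + δ n), g' t = g (x + δ n) - g (x - δ n) := by
      rw [hg _ hxy1, hg _ hxy2]
      exact (intervalIntegral.integral_interval_sub_left (hgint _ hxy2) (hgint _ hxy1)).symm
    have hnn : 0 ≤ ∫ t in closedBall x (δ n), f t := by
      rw [hIcc, hind, hIi, hsubint, sub_nonneg]
      exact hm hxy1 hxy2 (by linarith [(hδpos n).le])
    rw [setAverage_eq]
    exact smul_nonneg (by positivity) hnn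
  have hne : ∀ᵐ x ∂(volume : Measure ℝ), x ≠ y := by
    have : (volume : Measure ℝ) {x | ¬ x ≠ y} = 0 := by
      simp
    exact this
  filter_upwards [ae_restrict_of_ae hae, ae_restrict_of_ae hne, ae_restrict_mem measurableSet_Ioc]
    with x h1 h2 h3
  have hx : x ∈ Ioo 0 y := ⟨h3.1, lt_of_le_of_ne h3.2 h2⟩
  have := h1 hx
  rwa [hf, indicator_of_mem h3] at this

lemma mono_of_ae_nonneg (y : ℝ) (hy : 0 < y) (g g' : ℝ → ℝ)
    (hg' : IntervalIntegrable g' volume 0 y)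
    (hg : ∀ x ∈ Icc (0 : ℝ) y, g x = ∫ t in (0 : ℝ)..x, g' t)
    (h : ∀ᵐ x ∂(volume.restrict (Ioc (0:ℝ) y)), 0 ≤ g' x) :
    MonotoneOn g (Icc (0 : ℝ) y) := by
  intro a ha b hb hab
  rw [hg a ha, hg b hb]
  have hgint : ∀ c ∈ Icc (0:ℝ) y, IntervalIntegrable g' volume 0 c := by
    intro c hc
    exact hg'.mono_set
      (by rw [uIcc_of_le hy.le, uIcc_of_le hc.1]; exact Icc_subset_Icc le_rfl hc.2)
  have hsub : (∫ t in (0:ℝ)..b, g' t) - ∫ t in (0:ℝ)..a, g' t = ∫ t in a..b, g' t :=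
    intervalIntegral.integral_interval_sub_left (hgint b hb) (hgint a ha)
  have h2 : 0 ≤ ∫ t in a..b, g' t := by
    rw [intervalIntegral.integral_of_le hab]
    exact setIntegral_nonneg_of_ae_restrict
      (ae_restrict_of_ae_restrict_of_subset (Ioc_subset_Ioc ha.1 hb.2) h)
  linarith

lemma neg_part_zero_iff_mono (y : ℝ) (hy : 0 < y) (g g' : ℝ → ℝ)
    (hg' : IntervalIntegrable g' volume 0 y)
    (hg : ∀ x ∈ Icc (0 : ℝ) y, g x = ∫ t in (0 : ℝ)..x, g' t) :
    (∫ x in (0 : ℝ)..y, max (-(g' x)) 0) = 0 ↔ MonotoneOn g (Icc (0 : ℝ) y) := by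
  have hNint : IntervalIntegrable (fun x => max (-(g' x)) 0) volume 0 y :=
    ⟨hg'.1.neg.pos_part, hg'.2.neg.pos_part⟩
  have hiff := intervalIntegral.integral_eq_zero_iff_of_le_of_nonneg_ae (μ := volume)
    hy.le (Eventually.of_forall fun x => le_max_right (-(g' x)) 0) hNint
  refine hiff.trans ?_
  constructor
  · intro h
    apply mono_of_ae_nonneg y hy g g' hg' hg
    filter_upwards [h] with x hx
    have hx' : max (-(g' x)) 0 = 0 := by simpa using hx
    have h1 : -(g' x) ≤ 0 := hx' ▸ le_max_left _ _
    linarith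
  · intro h
    filter_upwards [ae_nonneg_of_mono y hy g g' hg' hg h] with x hx
    simp [max_eq_right, neg_nonpos.mpr hx]

end LomStarAux

/-- Extreme values of the normalized index of lack of monotonicity
`LOM*_y(g) = 2 min{LOI*_y(g), LOD*_y(g)}`: it is `0` iff `g` is non-decreasing
everywhere on `[0,y]` or non-increasing everywhere on `[0,y]`, and it is `1` iff
`LOI*_y(g) = LOD*_y(g)`. -/
theorem lom_star_extremes (y : ℝ) (hy : 0 < y) (g g' : ℝ → ℝ)
    (hg' : IntervalIntegrable g' volume 0 y)
    (hg : ∀ x ∈ Icc (0 : ℝ) y, g x = ∫ t in (0 : ℝ)..x, g' t)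
    (hpos : 0 < ∫ x in (0 : ℝ)..y, |g' x|) :
    (2 * min ((∫ x in (0 : ℝ)..y, max (-(g' x)) 0) / ∫ x in (0 : ℝ)..y, |g' x|)
          ((∫ x in (0 : ℝ)..y, max (g' x) 0) / ∫ x in (0 : ℝ)..y, |g' x|) = 0 ↔
        (MonotoneOn g (Icc (0 : ℝ) y) ∨ AntitoneOn g (Icc (0 : ℝ) y))) ∧
    (2 * min ((∫ x in (0 : ℝ)..y, max (-(g' x)) 0) / ∫ x in (0 : ℝ)..y, |g' x|)
          ((∫ x in (0 : ℝ)..y, max (g' x) 0) / ∫ x in (0 : ℝ)..y, |g' x|) = 1 ↔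
        ((∫ x in (0 : ℝ)..y, max (-(g' x)) 0) / ∫ x in (0 : ℝ)..y, |g' x|) =
          ((∫ x in (0 : ℝ)..y, max (g' x) 0) / ∫ x in (0 : ℝ)..y, |g' x|)) := by
  set I : ℝ := ∫ x in (0 : ℝ)..y, |g' x| with hI
  set N : ℝ := ∫ x in (0 : ℝ)..y, max (-(g' x)) 0 with hN
  set P : ℝ := ∫ x in (0 : ℝ)..y, max (g' x) 0 with hP
  have hNint : IntervalIntegrable (fun x => max (-(g' x)) 0) volume 0 y :=
    ⟨hg'.1.neg.pos_part, hg'.2.neg.pos_part⟩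
  have hPint : IntervalIntegrable (fun x => max (g' x) 0) volume 0 y :=
    ⟨hg'.1.pos_part, hg'.2.pos_part⟩
  have hNP : N + P = I := by
    rw [hN, hP, hI, ← intervalIntegral.integral_add hNint hPint]
    apply intervalIntegral.integral_congr
    intro x _
    show max (-(g' x)) 0 + max (g' x) 0 = |g' x|
    rw [add_comm]
    exact max_zero_add_max_neg_zero_eq_abs_self (g' x)
  have hN0 : 0 ≤ N := intervalIntegral.integral_nonneg hy.le fun u _ => le_max_right _ _
  have hP0 : 0 ≤ P := intervalIntegral.integral_nonneg hy.le fun u _ => le_max_right _ _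
  have hIne : I ≠ 0 := hpos.ne'
  have hNmono : N = 0 ↔ MonotoneOn g (Icc (0 : ℝ) y) :=
    LomStarAux.neg_part_zero_iff_mono y hy g g' hg' hg
  have hPanti : P = 0 ↔ AntitoneOn g (Icc (0 : ℝ) y) := by
    have hg'neg : IntervalIntegrable (fun x => -(g' x)) volume 0 y := hg'.neg
    have hgneg : ∀ x ∈ Icc (0 : ℝ) y, -(g x) = ∫ t in (0 : ℝ)..x, -(g' t) := by
      intro x hx
      rw [hg x hx, intervalIntegral.integral_neg]
    have := LomStarAux.neg_part_zero_iff_mono y hy (fun x => -(g x)) (fun x => -(g' x))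
      hg'neg hgneg
    simp only [neg_neg] at this
    refine this.trans ?_
    constructor
    · intro hmono a ha b hb hab
      have h2 := hmono ha hb hab
      dsimp only at h2
      linarith
    · intro hanti a ha b hb hab
      dsimp only
      have h2 := hanti ha hb hab
      linarith
  constructor
  · constructor
    · intro h
      have hmin : min (N / I) (P / I) = 0 := by linarith [h]
      rcases min_cases (N / I) (P / I) with ⟨he, _⟩ | ⟨he, _⟩
      · left
        exact hNmono.mp ((div_eq_zero_iff.mp (he ▸ hmin)).resolve_right hIne)
      · right
        exact hPanti.mp ((div_eq_zero_iff.mp (he ▸ hmin)).resolve_right hIne)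
    · rintro (h | h)
      · have : N = 0 := hNmono.mpr h
        rw [this, zero_div]
        rw [min_eq_left (div_nonneg hP0 hpos.le)]
        ring
      · have : P = 0 := hPanti.mpr h
        rw [this, zero_div]
        rw [min_eq_right (div_nonneg hN0 hpos.le)]
        ring
  · have hsum : N / I + P / I = 1 := by
      rw [← add_div, hNP, div_self hIne]
    constructor
    · intro h
      rcases min_cases (N / I) (P / I) with ⟨he, _⟩ | ⟨he, hle⟩ <;> rw [he] at h <;> linarith
    · intro h
      rw [h, min_self]
      linarith
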